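/- Let ρ > 0 and let n be a positive integer. If X and Y are independent real-valued random variables with X following the Exponential(ρ) distribution and Y following the Gamma(n, ρ) distribution, then Z = X/Y + 1 follows the Pareto(1, n) distribution. -/

import Mathlib

open MeasureTheory ProbabilityTheory Real

open Set

private lemma gamma_laplace {a r l : ℝ} (ha : 0 < a) (hr : 0 < r) (hl : 0 ≤ l) :
    ∫⁻ y, ENNReal.ofReal (exp (-(l * y))) ∂(gammaMeasure a r)
      = ENNReal.ofReal ((r / (r + l)) ^ a) := by
  have hrl : 0 < r + l := by linarith
  rw [gammaMeasure, lintegral_withDensity_eq_lintegral_mul _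
      (show Measurable (gammaPDF a r) from (measurable_gammaPDFReal a r).ennreal_ofReal)
      (by fun_prop)]
  have hpt : ∀ y : ℝ, (gammaPDF a r * fun y => ENNReal.ofReal (exp (-(l * y)))) y
      = ENNReal.ofReal ((r / (r + l)) ^ a) * gammaPDF a (r + l) y := by
    intro y
    simp only [Pi.mul_apply]
    rcases lt_or_ge y 0 with hy | hy
    · rw [gammaPDF_of_neg hy, gammaPDF_of_neg hy, zero_mul, mul_zero]
    · rw [gammaPDF_of_nonneg hy, gammaPDF_of_nonneg hy,
        ← ENNReal.ofReal_mul (by positivity), ← ENNReal.ofReal_mul (by positivity)]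
      congr 1
      rw [div_rpow hr.le hrl.le]
      have h1 : exp (-(r * y)) * exp (-(l * y)) = exp (-((r + l) * y)) := by
        rw [← exp_add]; ring_nf
      have h2 : (r:ℝ) ^ a ≠ 0 := by positivity
      have h3 : ((r + l):ℝ) ^ a ≠ 0 := by positivity
      field_simp
      ring_nf
      rw [sub_eq_add_neg, exp_add]
      ring
  rw [lintegral_congr hpt, lintegral_const_mul _ (show Measurable (gammaPDF a (r+l)) from (measurable_gammaPDFReal a (r+l)).ennreal_ofReal),
    lintegral_gammaPDF_eq_one ha hrl, mul_one]

private lemma pareto_Iic_of_lt {r t : ℝ} (ht : t < 1) : paretoMeasure 1 r (Iic t) = 0 := by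
  refine measure_mono_null (Iic_subset_Iio.mpr ht) ?_
  rw [paretoMeasure, withDensity_apply _ measurableSet_Iio]
  exact lintegral_paretoPDF_of_le le_rfl

private lemma pareto_Iic_of_le {r t : ℝ} (hr : 0 < r) (ht : 1 ≤ t) :
    paretoMeasure 1 r (Iic t) = ENNReal.ofReal (1 - t ^ (-r)) := by
  have ht0 : (0:ℝ) < t := lt_of_lt_of_le one_pos ht
  rw [paretoMeasure, withDensity_apply _ measurableSet_Iic,
    lintegral_Iic_eq_lintegral_Iio_add_Icc _ ht, lintegral_paretoPDF_of_le le_rfl, zero_add]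
  have hcong : ∀ x ∈ Icc (1:ℝ) t, paretoPDF 1 r x = ENNReal.ofReal (r * x ^ (-(r+1))) := by
    intro x hx
    rw [paretoPDF_of_le hx.1, one_rpow, mul_one]
  rw [setLIntegral_congr_fun_ae measurableSet_Icc (ae_of_all _ hcong)]
  have hint : IntegrableOn (fun x : ℝ => r * x ^ (-(r+1))) (Icc 1 t) := by
    apply ContinuousOn.integrableOn_compact isCompact_Icc
    exact (continuousOn_id.rpow_const fun x hx => Or.inl (by
      have h1 : (1:ℝ) ≤ x := hx.1; intro h; rw [id_eq] at h; linarith)).const_smul r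
  rw [← ofReal_integral_eq_lintegral_ofReal hint (by
    filter_upwards [ae_restrict_mem measurableSet_Icc] with x hx
    have : (0:ℝ) < x := lt_of_lt_of_le one_pos hx.1
    positivity)]
  congr 1
  rw [integral_Icc_eq_integral_Ioc, ← intervalIntegral.integral_of_le ht,
    intervalIntegral.integral_const_mul, integral_rpow (Or.inr ⟨by intro h; nlinarith,
      by rw [Set.uIcc_of_le ht]; intro h; exact absurd h.1 (by norm_num)⟩)]
  have hrne : r ≠ 0 := hr.ne'
  have : -(r+1) + 1 = -r := by ring
  rw [this, one_rpow]
  field_simp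
  linear_combination

private lemma expMeasure_Iic {r : ℝ} (hr : 0 < r) (x : ℝ) :
    expMeasure r (Iic x) = ENNReal.ofReal (if 0 ≤ x then 1 - exp (-(r * x)) else 0) := by
  rw [expMeasure, gammaMeasure, withDensity_apply _ measurableSet_Iic]
  exact lintegral_exponentialPDF_eq_antiDeriv hr x

private lemma gamma_ae_pos {a r : ℝ} : ∀ᵐ y ∂(gammaMeasure a r), 0 < y := by
  rw [ae_iff]
  have h : {y : ℝ | ¬ 0 < y} = Iic 0 := by ext y; simp [not_lt]
  rw [h, gammaMeasure, withDensity_apply _ measurableSet_Iic,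
    setLIntegral_congr (Iio_ae_eq_Iic (a := (0:ℝ))).symm]
  exact lintegral_gammaPDF_of_nonpos le_rfl


/-- If `X ~ Exponential(ρ)` and `Y ~ Gamma(n, ρ)` are independent (with `ρ > 0`, `n` a
positive integer), then `Z = X / Y + 1` follows the `Pareto(1, n)` distribution. -/
theorem exponential_div_gamma_add_one_pareto
    {Ω : Type*} [MeasurableSpace Ω] (P : Measure Ω) [IsProbabilityMeasure P]
    (ρ : ℝ) (hρ : 0 < ρ) (n : ℕ) (hn : 0 < n) (X Y : Ω → ℝ)
    (hXmeas : Measurable X) (hYmeas : Measurable Y)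
    (hX : Measure.map X P = expMeasure ρ)
    (hY : Measure.map Y P = gammaMeasure n ρ)
    (hindep : IndepFun X Y P) :
    Measure.map (fun ω => X ω / Y ω + 1) P = paretoMeasure 1 n := by
  have hnR : (0:ℝ) < n := Nat.cast_pos.mpr hn
  haveI : IsProbabilityMeasure (expMeasure ρ) := isProbabilityMeasure_expMeasure hρ
  haveI : IsProbabilityMeasure (gammaMeasure n ρ) := isProbabilityMeasure_gammaMeasure hnR hρ
  have hZ : Measurable (fun ω => X ω / Y ω + 1) := (hXmeas.div hYmeas).add_const 1
  haveI : IsProbabilityMeasure (Measure.map (fun ω => X ω / Y ω + 1) P) :=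
    Measure.isProbabilityMeasure_map hZ.aemeasurable
  have hprod : Measure.map (fun ω => (X ω, Y ω)) P = (expMeasure ρ).prod (gammaMeasure n ρ) := by
    rw [← hX, ← hY]
    exact (ProbabilityTheory.indepFun_iff_map_prod_eq_prod_map_map hXmeas.aemeasurable
      hYmeas.aemeasurable).mp hindep
  refine Measure.ext_of_Iic _ _ fun t => ?_
  have hs : MeasurableSet {p : ℝ × ℝ | p.1 / p.2 + 1 ≤ t} :=
    measurableSet_le ((measurable_fst.div measurable_snd).add_const 1) measurable_const
  rw [Measure.map_apply hZ measurableSet_Iic]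
  have hpre : (fun ω => X ω / Y ω + 1) ⁻¹' Iic t
      = (fun ω => (X ω, Y ω)) ⁻¹' {p : ℝ × ℝ | p.1 / p.2 + 1 ≤ t} := rfl
  rw [hpre, ← Measure.map_apply (hXmeas.prodMk hYmeas) hs, hprod,
    Measure.prod_apply_symm hs]
  have hae : ∀ᵐ y ∂(gammaMeasure (n:ℝ) ρ),
      expMeasure ρ ((fun x => (x, y)) ⁻¹' {p : ℝ × ℝ | p.1 / p.2 + 1 ≤ t})
        = ENNReal.ofReal (if 0 ≤ (t - 1) * y then 1 - exp (-(ρ * ((t - 1) * y))) else 0) := by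
    filter_upwards [gamma_ae_pos] with y hy
    have hset : ((fun x : ℝ => (x, y)) ⁻¹' {p : ℝ × ℝ | p.1 / p.2 + 1 ≤ t})
        = Iic ((t - 1) * y) := by
      ext x
      simp only [Set.mem_preimage, Set.mem_setOf_eq, Set.mem_Iic]
      have h1 : x / y + 1 ≤ t ↔ x / y ≤ t - 1 := by constructor <;> intro <;> linarith
      rw [h1, div_le_iff₀ hy]
    rw [hset, expMeasure_Iic hρ]
  rw [lintegral_congr_ae hae]
  rcases lt_or_ge t 1 with hlt | hle
  · have hae0 : ∀ᵐ y ∂(gammaMeasure (n:ℝ) ρ),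
        ENNReal.ofReal (if 0 ≤ (t - 1) * y then 1 - exp (-(ρ * ((t - 1) * y))) else 0)
          = 0 := by
      filter_upwards [gamma_ae_pos] with y hy
      rw [if_neg (not_le.mpr (mul_neg_of_neg_of_pos (by linarith) hy)), ENNReal.ofReal_zero]
    rw [lintegral_congr_ae hae0, lintegral_zero, pareto_Iic_of_lt hlt]
  · have ht0 : (0:ℝ) < t := lt_of_lt_of_le one_pos hle
    set l := ρ * (t - 1) with hl_def
    have hl : 0 ≤ l := mul_nonneg hρ.le (by linarith)
    have hae2 : ∀ᵐ y ∂(gammaMeasure (n:ℝ) ρ),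
        ENNReal.ofReal (if 0 ≤ (t - 1) * y then 1 - exp (-(ρ * ((t - 1) * y))) else 0)
          = 1 - ENNReal.ofReal (exp (-(l * y))) := by
      filter_upwards [gamma_ae_pos] with y hy
      rw [if_pos (mul_nonneg (by linarith) hy.le), show ρ * ((t - 1) * y) = l * y by
        rw [hl_def]; ring, ENNReal.ofReal_sub _ (exp_pos _).le, ENNReal.ofReal_one]
    rw [lintegral_congr_ae hae2]
    have hmf : Measurable (fun y : ℝ => ENNReal.ofReal (exp (-(l * y)))) := by fun_prop
    have hle1 : (fun y : ℝ => ENNReal.ofReal (exp (-(l * y))))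
        ≤ᵐ[gammaMeasure (n:ℝ) ρ] fun _ => 1 := by
      filter_upwards [gamma_ae_pos] with y hy
      rw [← ENNReal.ofReal_one]
      exact ENNReal.ofReal_le_ofReal (exp_le_one_iff.mpr (by
        have : 0 ≤ l * y := mul_nonneg hl hy.le
        linarith))
    have hfin : ∫⁻ y, ENNReal.ofReal (exp (-(l * y))) ∂(gammaMeasure (n:ℝ) ρ) ≠ ⊤ := by
      rw [gamma_laplace hnR hρ hl]; exact ENNReal.ofReal_ne_top
    rw [lintegral_sub hmf hfin hle1, lintegral_one, measure_univ, gamma_laplace hnR hρ hl]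
    have hkey : (ρ / (ρ + l)) ^ (n:ℝ) = t ^ (-(n:ℝ)) := by
      have h1 : ρ + l = ρ * t := by rw [hl_def]; ring
      rw [h1, show ρ / (ρ * t) = t⁻¹ by field_simp, ← rpow_neg_one,
        ← rpow_mul ht0.le]
      norm_num
    rw [hkey, pareto_Iic_of_le hnR hle,
      ENNReal.ofReal_sub _ (rpow_nonneg ht0.le _), ENNReal.ofReal_one]
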